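/- Consider a commutative square of commutative ring homomorphisms μ : A → A_1, ν : A → A_2, σ : A_1 → A', π : A_2 → A' with σ∘μ = π∘ν, which is a pull-back square (i.e., for every pair (x_1, x_2) ∈ A_1 × A_2 with σ(x_1) = π(x_2) there exists a unique a ∈ A with μ(a) = x_1 and ν(a) = x_2), and suppose that π or σ is surjective. Then the square has the Milnor patching property for unimodular rows: for every n ≥ 1 and every unimodular n-row f over A_1 whose image f' over A' lies in the E_n(A')-orbit of e = (1,0,…,0), there exists a unimodular n-row g over A whose image g' over A_1 lies in the E_n(A_1)-orbit of f. -/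

import Mathlib

/-- A matrix is *elementary* if it differs from the identity matrix in
at most one nonzero off-diagonal entry. -/
def IsElemMat {A : Type*} [CommRing A] {n : ℕ} (E : Matrix (Fin n) (Fin n) A) : Prop :=
  ∃ (i j : Fin n) (c : A), i ≠ j ∧ E = Matrix.transvection i j c

/-- Membership in the elementary group `E_n(A)`: a product of elementary matrices. -/
def IsElementary {A : Type*} [CommRing A] {n : ℕ} (E : Matrix (Fin n) (Fin n) A) : Prop :=
  E ∈ Submonoid.closure { E : Matrix (Fin n) (Fin n) A | IsElemMat E }

/-- A row is unimodular if its entries generate the unit ideal. -/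
def IsUnimodular {A : Type*} [CommRing A] {n : ℕ} (v : Fin n → A) : Prop :=
  Ideal.span (Set.range v) = ⊤

/-- The standard unimodular row `e = (1,0,…,0)`. -/
def stdRow (A : Type*) [CommRing A] (n : ℕ) : Fin n → A := fun i => if i.1 = 0 then 1 else 0

/-- `f` and `g` lie in the same orbit of the right action of `E_n(A)`. -/
def ElemEquiv {A : Type*} [CommRing A] {n : ℕ} (f g : Fin n → A) : Prop :=
  ∃ E : Matrix (Fin n) (Fin n) A, IsElementary E ∧ Matrix.vecMul f E = g

lemma transvection_map' {A B : Type*} [CommRing A] [CommRing B] (ρ : A →+* B) {n : ℕ}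
    (i j : Fin n) (c : A) :
    (Matrix.transvection i j c).map ρ = Matrix.transvection i j (ρ c) := by
  ext a b
  simp [Matrix.transvection, Matrix.single, Matrix.one_apply, apply_ite ρ]

lemma isElementary_inv {A : Type*} [CommRing A] {n : ℕ} {E : Matrix (Fin n) (Fin n) A}
    (hE : IsElementary E) : ∃ E', IsElementary E' ∧ E * E' = 1 ∧ E' * E = 1 := by
  induction hE using Submonoid.closure_induction with
  | mem E hE =>
      obtain ⟨i, j, c, hij, rfl⟩ := hE
      refine ⟨Matrix.transvection i j (-c), Submonoid.subset_closure ⟨i, j, -c, hij, rfl⟩, ?_, ?_⟩ <;>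
        rw [Matrix.transvection_mul_transvection_same _ _ hij] <;> simp [Matrix.transvection_zero]
  | one => exact ⟨1, Submonoid.one_mem _, by simp, by simp⟩
  | mul E F _ _ hE hF =>
      obtain ⟨E', hE', hEE', hE'E⟩ := hE
      obtain ⟨F', hF', hFF', hF'F⟩ := hF
      refine ⟨F' * E', Submonoid.mul_mem _ hF' hE', ?_, ?_⟩
      · rw [mul_assoc, ← mul_assoc F, hFF', one_mul, hEE']
      · rw [mul_assoc, ← mul_assoc E', hE'E, one_mul, hF'F]

lemma isElementary_lift {A B : Type*} [CommRing A] [CommRing B] {ρ : A →+* B}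
    (hρ : Function.Surjective ρ) {n : ℕ} {E : Matrix (Fin n) (Fin n) B}
    (hE : IsElementary E) : ∃ F : Matrix (Fin n) (Fin n) A, IsElementary F ∧ F.map ρ = E := by
  induction hE using Submonoid.closure_induction with
  | mem E hE =>
      obtain ⟨i, j, c, hij, rfl⟩ := hE
      obtain ⟨c₀, rfl⟩ := hρ c
      exact ⟨Matrix.transvection i j c₀, Submonoid.subset_closure ⟨i, j, c₀, hij, rfl⟩,
        transvection_map' ρ i j c₀⟩
  | one =>
      refine ⟨1, Submonoid.one_mem _, ?_⟩
      have := (RingHom.mapMatrix (m := Fin n) ρ).map_one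
      simpa [RingHom.mapMatrix_apply] using this
  | mul E F _ _ hE hF =>
      obtain ⟨E₀, hE₀, rfl⟩ := hE
      obtain ⟨F₀, hF₀, rfl⟩ := hF
      refine ⟨E₀ * F₀, Submonoid.mul_mem _ hE₀ hF₀, ?_⟩
      have := (RingHom.mapMatrix (m := Fin n) ρ).map_mul E₀ F₀
      simpa [RingHom.mapMatrix_apply] using this

lemma map_vecMul_row {A B : Type*} [CommRing A] [CommRing B] (ρ : A →+* B) {n : ℕ}
    (v : Fin n → A) (M : Matrix (Fin n) (Fin n) A) :
    (fun i => ρ (Matrix.vecMul v M i)) = Matrix.vecMul (fun i => ρ (v i)) (M.map ρ) := by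
  funext i
  exact RingHom.map_vecMul ρ M v i

lemma vecMul_mem_span {A : Type*} [CommRing A] {n : ℕ} (v : Fin n → A)
    (M : Matrix (Fin n) (Fin n) A) (j : Fin n) :
    Matrix.vecMul v M j ∈ Ideal.span (Set.range v) := by
  rw [Ideal.mem_span_range_iff_exists_fun]
  exact ⟨fun i => M i j, by simp [Matrix.vecMul, dotProduct, mul_comm]⟩

lemma unimodular_of_vecMul {A : Type*} [CommRing A] {n : ℕ} {v w : Fin n → A}
    {M : Matrix (Fin n) (Fin n) A} (h : Matrix.vecMul v M = w) (hw : IsUnimodular w) :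
    IsUnimodular v := by
  rw [IsUnimodular, eq_top_iff, ← hw, Ideal.span_le]
  rintro x ⟨j, rfl⟩
  rw [← h]
  exact vecMul_mem_span v M j

lemma stdRow_unimodular (A : Type*) [CommRing A] {n : ℕ} (hn : 1 ≤ n) :
    IsUnimodular (stdRow A n) := by
  rw [IsUnimodular, Ideal.eq_top_iff_one]
  apply Ideal.subset_span
  exact ⟨⟨0, hn⟩, by simp [stdRow]⟩

lemma patch_unimodular
    {A A₁ A₂ A' : Type*} [CommRing A] [CommRing A₁] [CommRing A₂] [CommRing A']
    (μ : A →+* A₁) (ν : A →+* A₂) (σ : A₁ →+* A') (π : A₂ →+* A')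
    (hcomm : σ.comp μ = π.comp ν)
    (hpb : ∀ (x₁ : A₁) (x₂ : A₂), σ x₁ = π x₂ → ∃! a : A, μ a = x₁ ∧ ν a = x₂)
    (hsurj : Function.Surjective π ∨ Function.Surjective σ)
    {n : ℕ} {g : Fin n → A} (h₁ : IsUnimodular fun i => μ (g i))
    (h₂ : IsUnimodular fun i => ν (g i)) : IsUnimodular g := by
  have hc : ∀ a : A, σ (μ a) = π (ν a) := fun a => RingHom.congr_fun hcomm a
  obtain ⟨b, hb⟩ := Ideal.mem_span_range_iff_exists_fun.mp
    (h₁ ▸ Submodule.mem_top : (1 : A₁) ∈ Ideal.span (Set.range fun i => μ (g i)))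
  obtain ⟨c, hcs⟩ := Ideal.mem_span_range_iff_exists_fun.mp
    (h₂ ▸ Submodule.mem_top : (1 : A₂) ∈ Ideal.span (Set.range fun i => ν (g i)))
  rw [IsUnimodular, Ideal.eq_top_iff_one]
  rcases hsurj with hπ | hσ
  · -- π surjective
    choose ct hct using fun i => hπ (σ (b i))
    have hmatch : ∀ i, σ (b i) = π (ct i) := fun i => (hct i).symm
    choose a ha _ using fun i => hpb (b i) (ct i) (hmatch i)
    set s : A := ∑ i, a i * g i with hs
    have hμs : μ s = 1 := by
      rw [hs, map_sum]
      simp only [map_mul]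
      rw [← hb]; exact Finset.sum_congr rfl fun i _ => by rw [(ha i).1]
    set t : A₂ := ν s with ht
    have hπt : π t = 1 := by
      rw [ht, ← hc, hμs, map_one]
    -- second family
    have hmatch2 : ∀ i, σ (0 : A₁) = π (c i * (1 - t)) := by
      intro i
      simp [map_mul, hπt]
    choose d hd _ using fun i => hpb 0 (c i * (1 - t)) (hmatch2 i)
    set r : A := ∑ i, d i * g i with hr
    have hμr : μ r = 0 := by
      rw [hr, map_sum]
      simp only [map_mul]
      exact Finset.sum_eq_zero fun i _ => by rw [(hd i).1, zero_mul]
    have hνr : ν r = 1 - t := by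
      rw [hr, map_sum]
      simp only [map_mul]
      have : ∀ i ∈ Finset.univ, ν (d i) * ν (g i) = (1 - t) * (c i * ν (g i)) := by
        intro i _
        rw [(hd i).2]; ring
      rw [Finset.sum_congr rfl this, ← Finset.mul_sum, hcs, mul_one]
    have hone : s + r = 1 := by
      obtain ⟨u, hu, huniq⟩ := hpb (1 : A₁) (1 : A₂) (by simp)
      have h1 : s + r = u := huniq _ ⟨by rw [map_add, hμs, hμr, add_zero],
        by rw [map_add, ← ht, hνr]; ring⟩
      have h2 : (1 : A) = u := huniq _ ⟨map_one μ, map_one ν⟩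
      rw [h1, h2]
    rw [← hone]
    apply Ideal.add_mem
    · exact Ideal.sum_mem _ fun i _ => Ideal.mul_mem_left _ _ (Ideal.subset_span ⟨i, rfl⟩)
    · exact Ideal.sum_mem _ fun i _ => Ideal.mul_mem_left _ _ (Ideal.subset_span ⟨i, rfl⟩)
  · -- σ surjective
    choose bt hbt using fun i => hσ (π (c i))
    choose a ha _ using fun i => hpb (bt i) (c i) (hbt i)
    set s : A := ∑ i, a i * g i with hs
    have hνs : ν s = 1 := by
      rw [hs, map_sum]
      simp only [map_mul]
      rw [← hcs]; exact Finset.sum_congr rfl fun i _ => by rw [(ha i).2]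
    set t : A₁ := μ s with ht
    have hσt : σ t = 1 := by
      rw [ht, hc, hνs, map_one]
    have hmatch2 : ∀ i, σ (b i * (1 - t)) = π (0 : A₂) := by
      intro i
      simp [map_mul, hσt]
    choose d hd _ using fun i => hpb (b i * (1 - t)) 0 (hmatch2 i)
    set r : A := ∑ i, d i * g i with hr
    have hνr : ν r = 0 := by
      rw [hr, map_sum]
      simp only [map_mul]
      exact Finset.sum_eq_zero fun i _ => by rw [(hd i).2, zero_mul]
    have hμr : μ r = 1 - t := by
      rw [hr, map_sum]
      simp only [map_mul]
      have : ∀ i ∈ Finset.univ, μ (d i) * μ (g i) = (1 - t) * (b i * μ (g i)) := by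
        intro i _
        rw [(hd i).1]; ring
      rw [Finset.sum_congr rfl this, ← Finset.mul_sum, hb, mul_one]
    have hone : s + r = 1 := by
      obtain ⟨u, hu, huniq⟩ := hpb (1 : A₁) (1 : A₂) (by simp)
      have h1 : s + r = u := huniq _ ⟨by rw [map_add, ← ht, hμr]; ring,
        by rw [map_add, hνs, hνr, add_zero]⟩
      have h2 : (1 : A) = u := huniq _ ⟨map_one μ, map_one ν⟩
      rw [h1, h2]
    rw [← hone]
    apply Ideal.add_mem
    · exact Ideal.sum_mem _ fun i _ => Ideal.mul_mem_left _ _ (Ideal.subset_span ⟨i, rfl⟩)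
    · exact Ideal.sum_mem _ fun i _ => Ideal.mul_mem_left _ _ (Ideal.subset_span ⟨i, rfl⟩)

theorem milnor_patching_pullback
    {A A₁ A₂ A' : Type*} [CommRing A] [CommRing A₁] [CommRing A₂] [CommRing A']
    (μ : A →+* A₁) (ν : A →+* A₂) (σ : A₁ →+* A') (π : A₂ →+* A')
    (hcomm : σ.comp μ = π.comp ν)
    (hpb : ∀ (x₁ : A₁) (x₂ : A₂), σ x₁ = π x₂ → ∃! a : A, μ a = x₁ ∧ ν a = x₂)
    (hsurj : Function.Surjective π ∨ Function.Surjective σ) :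
    ∀ n : ℕ, 1 ≤ n → ∀ f : Fin n → A₁, IsUnimodular f →
      ElemEquiv (fun i => σ (f i)) (stdRow A' n) →
      ∃ g : Fin n → A, IsUnimodular g ∧ ElemEquiv (fun i => μ (g i)) f := by
  intro n hn f hf ⟨E, hE, hEe⟩
  obtain ⟨E', hE', hEE', hE'E⟩ := isElementary_inv hE
  rcases hsurj with hπ | hσ
  · -- lift E along π
    obtain ⟨F, hF, hFmap⟩ := isElementary_lift hπ hE
    obtain ⟨F', hF', hFF', hF'F⟩ := isElementary_inv hF
    -- F'.map π = E'
    have hF'map : F'.map π = E' := by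
      have h1 : E * F'.map π = 1 := by
        rw [← hFmap, ← Matrix.map_mul, hFF']
        ext i j; simp [Matrix.map_apply, Matrix.one_apply, apply_ite π]
      calc F'.map π = (E' * E) * F'.map π := by rw [hE'E, one_mul]
        _ = E' * (E * F'.map π) := by rw [mul_assoc]
        _ = E' := by rw [h1, mul_one]
    set h₂ : Fin n → A₂ := Matrix.vecMul (stdRow A₂ n) F' with hh₂
    have hπstd : (fun i => π (stdRow A₂ n i)) = stdRow A' n := by
      funext i; simp [stdRow, apply_ite π]
    have hmatch : ∀ i, σ (f i) = π (h₂ i) := by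
      have e1 : (fun i => π (h₂ i)) = Matrix.vecMul (stdRow A' n) E' := by
        rw [hh₂, map_vecMul_row, hπstd, hF'map]
      have e2 : (fun i => σ (f i)) = Matrix.vecMul (stdRow A' n) E' := by
        rw [← hEe, Matrix.vecMul_vecMul, hEE', Matrix.vecMul_one]
      intro i
      rw [congrFun e2 i, congrFun e1 i]
    choose g hg _ using fun i => hpb (f i) (h₂ i) (hmatch i)
    have hμg : (fun i => μ (g i)) = f := funext fun i => (hg i).1
    have hνg : (fun i => ν (g i)) = h₂ := funext fun i => (hg i).2
    refine ⟨g, ?_, 1, Submonoid.one_mem _, by rw [Matrix.vecMul_one, hμg]⟩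
    apply patch_unimodular μ ν σ π hcomm hpb (Or.inl hπ)
    · rw [hμg]; exact hf
    · rw [hνg]
      have : Matrix.vecMul h₂ F = stdRow A₂ n := by
        rw [hh₂, Matrix.vecMul_vecMul, hF'F, Matrix.vecMul_one]
      exact unimodular_of_vecMul this (stdRow_unimodular A₂ hn)
  · -- lift E along σ
    obtain ⟨F, hF, hFmap⟩ := isElementary_lift hσ hE
    obtain ⟨F', hF', hFF', hF'F⟩ := isElementary_inv hF
    set f₁ : Fin n → A₁ := Matrix.vecMul f F with hf₁
    have hmatch : ∀ i, σ (f₁ i) = π (stdRow A₂ n i) := by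
      have e1 : (fun i => σ (f₁ i)) = stdRow A' n := by
        rw [hf₁, map_vecMul_row, hFmap]; exact hEe
      have e2 : (fun i => π (stdRow A₂ n i)) = stdRow A' n := by
        funext i; simp [stdRow, apply_ite π]
      intro i
      rw [congrFun e1 i, congrFun e2 i]
    choose g hg _ using fun i => hpb (f₁ i) (stdRow A₂ n i) (hmatch i)
    have hμg : (fun i => μ (g i)) = f₁ := funext fun i => (hg i).1
    have hνg : (fun i => ν (g i)) = stdRow A₂ n := funext fun i => (hg i).2
    refine ⟨g, ?_, F', hF', ?_⟩
    · apply patch_unimodular μ ν σ π hcomm hpb (Or.inr hσ)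
      · rw [hμg]
        have : Matrix.vecMul f₁ F' = f := by
          rw [hf₁, Matrix.vecMul_vecMul, hFF', Matrix.vecMul_one]
        exact unimodular_of_vecMul this hf
      · rw [hνg]; exact stdRow_unimodular A₂ hn
    · rw [hμg, hf₁, Matrix.vecMul_vecMul, hFF', Matrix.vecMul_one]
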